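/- arXiv:1808.03053 — 2 statements merged into one kernel-verified Lean document; each statement's English description precedes it below -/
import Mathlib

section
/- Let X ⊂ R^n (n ≥ 2) be a disconnected set whose closure Cl(X) is connected. Then for every r > sqrt(n−1)/2, the r-offset discretization Δ_r(X) = U(X,r) ∩ Z^n is 0-connected. -/
noncomputable section

/-- Embedding of an integer point into Euclidean `n`-space. -/
def toE (n : ℕ) (p : Fin n → ℤ) : EuclideanSpace ℝ (Fin n) := WithLp.toLp 2 (fun i => (p i : ℝ))

/-- Two integer points are `k`-adjacent iff they are distinct, all coordinates differ
by at most 1, and at most `n - k` coordinates differ. -/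
def kAdj (n k : ℕ) (p q : Fin n → ℤ) : Prop :=
  p ≠ q ∧ (∀ i, |p i - q i| ≤ 1) ∧
    (Finset.univ.filter (fun i => p i ≠ q i)).card ≤ n - k

/-- A set of integer points is `k`-connected iff any two of its points are joined by a
path inside the set whose consecutive points are `k`-adjacent. -/
def kConn (n k : ℕ) (S : Set (Fin n → ℤ)) : Prop :=
  ∀ p ∈ S, ∀ q ∈ S,
    Relation.ReflTransGen (fun a b => a ∈ S ∧ b ∈ S ∧ kAdj n k a b) p q

/-- The closed `r`-offset (closed `r`-neighborhood) of `X`. -/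
def offset (n : ℕ) (X : Set (EuclideanSpace ℝ (Fin n))) (r : ℝ) :
    Set (EuclideanSpace ℝ (Fin n)) := ⋃ x ∈ X, Metric.closedBall x r

/-- The `r`-offset discretization of `X`: the integer points in the `r`-offset. -/
def disc (n : ℕ) (X : Set (EuclideanSpace ℝ (Fin n))) (r : ℝ) :
    Set (Fin n → ℤ) := {p | toE n p ∈ offset n X r}

open Relation

/-! ### Auxiliary lemmas -/

lemma coord_le_dist {n : ℕ} (x y : EuclideanSpace ℝ (Fin n)) (i : Fin n) :
    |x i - y i| ≤ dist x y := by
  rw [EuclideanSpace.dist_eq, ← Real.sqrt_sq_eq_abs]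
  apply Real.sqrt_le_sqrt
  have : (x i - y i) ^ 2 = dist (x i) (y i) ^ 2 := by
    rw [Real.dist_eq, sq_abs]
  rw [this]
  exact Finset.single_le_sum (f := fun j => dist (x j) (y j) ^ 2)
    (fun j _ => sq_nonneg _) (Finset.mem_univ i)

lemma distE_mono {n : ℕ} (a b c d : EuclideanSpace ℝ (Fin n))
    (h : ∀ i, |a i - b i| ≤ |c i - d i|) : dist a b ≤ dist c d := by
  rw [EuclideanSpace.dist_eq, EuclideanSpace.dist_eq]
  apply Real.sqrt_le_sqrt
  apply Finset.sum_le_sum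
  intro i _
  rw [Real.dist_eq, Real.dist_eq]
  exact pow_le_pow_left₀ (abs_nonneg _) (h i) 2

lemma kAdj_symm {n k : ℕ} {a b : Fin n → ℤ} (h : kAdj n k a b) : kAdj n k b a := by
  obtain ⟨h1, h2, h3⟩ := h
  refine ⟨h1.symm, fun i => by rw [abs_sub_comm]; exact h2 i, ?_⟩
  have : (Finset.univ.filter (fun i => b i ≠ a i)) = (Finset.univ.filter (fun i => a i ≠ b i)) := by
    ext i; simp [ne_comm]
  rw [this]; exact h3

lemma rtg_symm {α : Type*} {r : α → α → Prop} (h : ∀ a b, r a b → r b a) {a b : α}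
    (hab : ReflTransGen r a b) : ReflTransGen r b a := by
  induction hab with
  | refl => exact .refl
  | tail _ hbc ih => exact ReflTransGen.head (h _ _ hbc) ih

lemma chain_of_preconnected {E : Type*} [PseudoMetricSpace E] {S : Set E}
    (hS : IsPreconnected S) {x y : E} (hx : x ∈ S) (hy : y ∈ S) {ε : ℝ} (hε : 0 < ε) :
    Relation.ReflTransGen (fun a b => a ∈ S ∧ b ∈ S ∧ dist a b < ε) x y := by
  by_contra hcon
  set Rel : E → E → Prop := fun a b => a ∈ S ∧ b ∈ S ∧ dist a b < ε with hRel
  set R : Set E := {z | ReflTransGen Rel x z} with hR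
  have hsub : S ⊆ (⋃ z ∈ S ∩ R, Metric.ball z ε) ∪ (⋃ z ∈ S \ R, Metric.ball z ε) := by
    intro z hz
    by_cases hzR : z ∈ R
    · exact Or.inl (Set.mem_biUnion ⟨hz, hzR⟩ (Metric.mem_ball_self hε))
    · exact Or.inr (Set.mem_biUnion ⟨hz, hzR⟩ (Metric.mem_ball_self hε))
  have h1 : (S ∩ (⋃ z ∈ S ∩ R, Metric.ball z ε)).Nonempty :=
    ⟨x, hx, Set.mem_biUnion ⟨hx, ReflTransGen.refl⟩ (Metric.mem_ball_self hε)⟩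
  have h2 : (S ∩ (⋃ z ∈ S \ R, Metric.ball z ε)).Nonempty :=
    ⟨y, hy, Set.mem_biUnion ⟨hy, hcon⟩ (Metric.mem_ball_self hε)⟩
  obtain ⟨w, hwS, hwu, hwv⟩ := hS _ _ (isOpen_biUnion fun _ _ => Metric.isOpen_ball)
    (isOpen_biUnion fun _ _ => Metric.isOpen_ball) hsub h1 h2
  obtain ⟨z, ⟨hzS, hzR⟩, hwz⟩ := Set.mem_iUnion₂.mp hwu
  obtain ⟨z', ⟨hz'S, hz'R⟩, hwz'⟩ := Set.mem_iUnion₂.mp hwv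
  apply hz'R
  have c1 : Rel z w := ⟨hzS, hwS, by rw [dist_comm]; exact Metric.mem_ball.mp hwz⟩
  have c2 : Rel w z' := ⟨hwS, hz'S, Metric.mem_ball.mp hwz'⟩
  exact (hzR.tail c1).tail c2

lemma step_toward {t : ℝ} {a : ℤ} (h : a ≠ round t) :
    |(a + Int.sign (round t - a) : ℝ) - t| ≤ |(a : ℝ) - t| := by
  have hr : |t - (round t : ℝ)| ≤ 1/2 := abs_sub_round t
  rw [abs_le] at hr
  rcases lt_trichotomy a (round t) with hlt | heq | hgt
  · rw [Int.sign_eq_one_of_pos (by omega)]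
    have h1 : (a : ℝ) + 1 ≤ (round t : ℝ) := by exact_mod_cast (by omega : a + 1 ≤ round t)
    push_cast
    rw [abs_of_nonpos (show (a:ℝ) - t ≤ 0 by linarith), abs_le]
    constructor <;> linarith
  · exact absurd heq h
  · rw [Int.sign_eq_neg_one_of_neg (by omega)]
    have h1 : (round t : ℝ) ≤ (a : ℝ) - 1 := by exact_mod_cast (by omega : round t ≤ a - 1)
    push_cast
    rw [abs_of_nonneg (show (0:ℝ) ≤ (a:ℝ) - t by linarith), abs_le]
    constructor <;> linarith

lemma sign_mem (d : ℤ) : Int.sign d = -1 ∨ Int.sign d = 0 ∨ Int.sign d = 1 := by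
  rcases lt_trichotomy d 0 with h | h | h
  · exact Or.inl (Int.sign_eq_neg_one_of_neg h)
  · subst h; simp
  · exact Or.inr (Or.inr (Int.sign_eq_one_of_pos h))

lemma natAbs_sub_sign (d : ℤ) (hd : d ≠ 0) : (d - Int.sign d).natAbs < d.natAbs := by
  rcases lt_trichotomy d 0 with h | h | h
  · rw [Int.sign_eq_neg_one_of_neg h]; omega
  · omega
  · rw [Int.sign_eq_one_of_pos h]; omega

lemma ball_conn {n : ℕ} (S : Set (Fin n → ℤ)) (x : EuclideanSpace ℝ (Fin n)) (s : ℝ)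
    (hS : ∀ q : Fin n → ℤ, dist (toE n q) x ≤ s → q ∈ S)
    (p : Fin n → ℤ) (hp : dist (toE n p) x ≤ s) :
    ReflTransGen (fun a b => a ∈ S ∧ b ∈ S ∧ kAdj n 0 a b) p (fun i => round (x i)) := by
  set q0 : Fin n → ℤ := fun i => round (x i) with hq0
  suffices H : ∀ N (p : Fin n → ℤ), (∑ i, (q0 i - p i).natAbs) ≤ N →
      dist (toE n p) x ≤ s →
      ReflTransGen (fun a b => a ∈ S ∧ b ∈ S ∧ kAdj n 0 a b) p q0 from
    H _ p le_rfl hp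
  intro N
  induction N with
  | zero =>
    intro p hsum hp
    have : p = q0 := by
      funext i
      have : (q0 i - p i).natAbs = 0 :=
        Finset.sum_eq_zero_iff.mp (Nat.le_zero.mp hsum) i (Finset.mem_univ i)
      omega
    rw [this]
  | succ N ih =>
    intro p hsum hp
    by_cases hpq : p = q0
    · rw [hpq]
    · set p' : Fin n → ℤ := fun i => p i + Int.sign (q0 i - p i) with hp'
      have hcoord : ∀ i, |(p' i : ℝ) - x i| ≤ |(p i : ℝ) - x i| := by
        intro i
        by_cases hi : p i = q0 i
        · simp [hp', hi]
        · have := step_toward (t := x i) (a := p i) (by simpa [hq0] using hi)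
          simpa [hp', hq0] using this
      have hd' : dist (toE n p') x ≤ s := by
        refine le_trans (distE_mono (toE n p') x (toE n p) x ?_) hp
        intro i; exact hcoord i
      have hmem : p ∈ S := hS p hp
      have hmem' : p' ∈ S := hS p' hd'
      have hne : p ≠ p' := by
        intro hcontra
        apply hpq
        funext i
        have h1 : p i = p' i := congrFun hcontra i
        have h2 : Int.sign (q0 i - p i) = 0 := by
          simp only [hp'] at h1; omega
        have := Int.sign_eq_zero_iff_zero.mp h2
        omega
      have hadj : kAdj n 0 p p' := by
        refine ⟨hne, fun i => ?_, ?_⟩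
        · simp only [hp']
          rcases sign_mem (q0 i - p i) with hs | hs | hs <;>
            rw [hs] <;> rw [abs_le] <;> constructor <;> omega
        · simpa using le_trans (Finset.card_filter_le _ _) (by simp)
      have hsum' : (∑ i, (q0 i - p' i).natAbs) ≤ N := by
        have hlt : (∑ i, (q0 i - p' i).natAbs) < ∑ i, (q0 i - p i).natAbs := by
          have hex : ∃ i, p i ≠ q0 i := by
            by_contra hc; push_neg at hc; exact hpq (funext hc)
          obtain ⟨i0, hi0⟩ := hex
          apply Finset.sum_lt_sum
          · intro i _
            by_cases hi : p i = q0 i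
            · simp [hp', hi]
            · have : q0 i - p' i = (q0 i - p i) - Int.sign (q0 i - p i) := by
                simp only [hp']; ring
              rw [this]
              exact le_of_lt (natAbs_sub_sign _ (by omega))
          · refine ⟨i0, Finset.mem_univ i0, ?_⟩
            have : q0 i0 - p' i0 = (q0 i0 - p i0) - Int.sign (q0 i0 - p i0) := by
              simp only [hp']; ring
            rw [this]
            exact natAbs_sub_sign _ (by omega)
        omega
      exact ReflTransGen.head ⟨hmem, hmem', hadj⟩ (ih p' hsum' hd')

lemma int_gap {t α : ℝ} (h : ∀ m : ℤ, α ≤ |t - (m:ℝ)|) {c : ℤ}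
    (hc : |(c:ℝ) - t| < 1) : |(c:ℝ) - t| ≤ 1 - α := by
  rcases le_or_gt (c:ℝ) t with h1 | h1
  · have h2 := h (c+1)
    push_cast at h2
    rw [abs_of_nonpos (by have := abs_lt.mp hc; linarith [this.1, this.2])] at h2
    rw [abs_of_nonpos (by linarith)]
    linarith
  · have h2 := h (c-1)
    push_cast at h2
    rw [abs_of_nonneg (by have := abs_lt.mp hc; linarith [this.1, this.2])] at h2
    rw [abs_of_nonneg (by linarith)]
    linarith

/-- If `X ⊆ ℝ^n` (`n ≥ 2`) is disconnected but its closure is connected, then for every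
`r > √(n-1) / 2` the `r`-offset discretization of `X` is `0`-connected. -/
theorem disc_zero_conn_of_disconnected (n : ℕ) (hn : 2 ≤ n)
    (X : Set (EuclideanSpace ℝ (Fin n)))
    (hX : ¬ IsConnected X) (hcl : IsConnected (closure X))
    (r : ℝ) (hr : Real.sqrt (n - 1) / 2 < r) :
    kConn n 0 (disc n X r) := by
  classical
  intro p hp q hq
  set S := disc n X r with hSdef
  set Rel : (Fin n → ℤ) → (Fin n → ℤ) → Prop :=
    fun a b => a ∈ S ∧ b ∈ S ∧ kAdj n 0 a b with hReldef
  -- witnesses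
  obtain ⟨x0, hx0X, hpx0⟩ : ∃ x0 ∈ X, dist (toE n p) x0 ≤ r := by
    have := hp
    simp only [hSdef, disc, offset, Set.mem_setOf_eq, Set.mem_iUnion,
      Metric.mem_closedBall, exists_prop] at this
    exact this
  obtain ⟨y0, hy0X, hqy0⟩ : ∃ y0 ∈ X, dist (toE n q) y0 ≤ r := by
    have := hq
    simp only [hSdef, disc, offset, Set.mem_setOf_eq, Set.mem_iUnion,
      Metric.mem_closedBall, exists_prop] at this
    exact this
  -- constants
  have hn1 : (0:ℝ) ≤ (n:ℝ) - 1 := by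
    have : (1:ℝ) ≤ (n:ℝ) := by exact_mod_cast (by omega : 1 ≤ n)
    linarith
  have hr0 : 0 < r := lt_of_le_of_lt (by positivity) hr
  have hrsq : (Real.sqrt ((n:ℝ)-1))^2 = (n:ℝ)-1 := Real.sq_sqrt hn1
  have hα2 : 0 < r^2 - ((n:ℝ)-1)/4 := by nlinarith [Real.sqrt_nonneg ((n:ℝ)-1)]
  set α := Real.sqrt (r^2 - ((n:ℝ)-1)/4) with hαdef
  have hαpos : 0 < α := Real.sqrt_pos.mpr hα2
  have hαsq : α^2 = r^2 - ((n:ℝ)-1)/4 := Real.sq_sqrt hα2.le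
  set β := min α (1/2 : ℝ) with hβdef
  have hβpos : 0 < β := lt_min hαpos (by norm_num)
  have hβhalf : β ≤ (1:ℝ)/2 := min_le_right _ _
  set δ := β/2 with hδdef
  have hδpos : 0 < δ := by positivity
  -- basic facts about rounding
  have hrnd_half : ∀ (z : EuclideanSpace ℝ (Fin n)) (i : Fin n),
      |(round (z i) : ℝ) - z i| ≤ 1/2 := by
    intro z i; rw [abs_sub_comm]; exact abs_sub_round (z i)
  have hrnd_min : ∀ (z : EuclideanSpace ℝ (Fin n)) (c : Fin n → ℤ),
      dist (toE n (fun i => round (z i))) z ≤ dist (toE n c) z := by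
    intro z c
    apply distE_mono
    intro i
    show |(round (z i):ℝ) - z i| ≤ |(c i : ℝ) - z i|
    rw [abs_sub_comm, abs_sub_comm ((c i:ℝ)) (z i)]
    exact round_le (z i) (c i)
  have hgoodX : ∀ z ∈ X, ∀ c : Fin n → ℤ, dist (toE n c) z ≤ r → c ∈ S := by
    intro z hz c hc
    simp only [hSdef, disc, offset, Set.mem_setOf_eq, Set.mem_iUnion,
      Metric.mem_closedBall, exists_prop]
    exact ⟨z, hz, hc⟩
  have hgood : ∀ z ∈ closure X, ∀ c : Fin n → ℤ, dist (toE n c) z < r → c ∈ S := by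
    intro z hz c hc
    obtain ⟨x, hxX, hxz⟩ := Metric.mem_closure_iff.mp hz (r - dist (toE n c) z) (by linarith)
    refine hgoodX x hxX c ?_
    calc dist (toE n c) x ≤ dist (toE n c) z + dist z x := dist_triangle _ _ _
      _ ≤ r := by linarith
  -- bad points are deep inside unit cubes
  have hbad : ∀ z : EuclideanSpace ℝ (Fin n),
      r ≤ dist (toE n (fun i => round (z i))) z → ∀ i, ∀ m : ℤ, α ≤ |z i - (m:ℝ)| := by
    intro z hz i m
    have hsum : r^2 ≤ ∑ j, dist ((toE n (fun i => round (z i))) j) (z j) ^ 2 := by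
      rw [EuclideanSpace.dist_eq] at hz
      exact (Real.le_sqrt hr0.le (Finset.sum_nonneg fun j _ => sq_nonneg _)).mp hz
    have hterm : ∀ j, dist ((toE n (fun i => round (z i))) j) (z j) ^ 2 ≤ 1/4 := by
      intro j
      have : dist ((toE n (fun i => round (z i))) j) (z j) = |(round (z j):ℝ) - z j| := by
        rw [Real.dist_eq]; rfl
      rw [this]
      nlinarith [hrnd_half z j, abs_nonneg ((round (z j):ℝ) - z j)]
    have hsplit : ∑ j, dist ((toE n (fun i => round (z i))) j) (z j) ^ 2
        ≤ dist ((toE n (fun i => round (z i))) i) (z i) ^ 2 + ((n:ℝ)-1)/4 := by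
      rw [← Finset.add_sum_erase _ _ (Finset.mem_univ i)]
      have h1 : ∑ j ∈ Finset.univ.erase i, dist ((toE n (fun i => round (z i))) j) (z j) ^ 2
          ≤ ∑ _j ∈ Finset.univ.erase i, (1/4:ℝ) :=
        Finset.sum_le_sum fun j _ => hterm j
      have h2 : ∑ _j ∈ Finset.univ.erase i, (1/4:ℝ) = ((n:ℝ)-1)/4 := by
        rw [Finset.sum_const, Finset.card_erase_of_mem (Finset.mem_univ i)]
        simp only [Finset.card_univ, Fintype.card_fin, nsmul_eq_mul]
        have : ((n - 1 : ℕ) : ℝ) = (n:ℝ) - 1 := by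
          push_cast [Nat.cast_sub (by omega : 1 ≤ n)]; ring
        rw [this]; ring
      linarith
    have hdisti : dist ((toE n (fun i => round (z i))) i) (z i) = |(round (z i):ℝ) - z i| := by
      rw [Real.dist_eq]; rfl
    have hi2 : α^2 ≤ |(round (z i):ℝ) - z i| ^ 2 := by
      rw [← hdisti, hαsq]; linarith
    have hi1 : α ≤ |(round (z i):ℝ) - z i| := by
      nlinarith [abs_nonneg ((round (z i):ℝ) - z i), hαpos]
    calc α ≤ |(round (z i):ℝ) - z i| := hi1
      _ = |z i - (round (z i):ℝ)| := by rw [abs_sub_comm]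
      _ ≤ |z i - (m:ℝ)| := round_le (z i) m
  -- rounded endpoints are in S
  set r0 : Fin n → ℤ := fun i => round (x0 i) with hr0def
  have hr0S : r0 ∈ S := hgoodX x0 hx0X r0 (le_trans (hrnd_min x0 p) hpx0)
  set ry : Fin n → ℤ := fun i => round (y0 i) with hrydef
  have hryS : ry ∈ S := hgoodX y0 hy0X ry (le_trans (hrnd_min y0 q) hqy0)
  -- the chain in the closure
  have hchain := chain_of_preconnected hcl.isPreconnected
    (subset_closure hx0X) (subset_closure hy0X) hδpos
  -- the invariant
  have key : ∀ z : EuclideanSpace ℝ (Fin n),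
      ReflTransGen (fun a b => a ∈ closure X ∧ b ∈ closure X ∧ dist a b < δ) x0 z →
      ∃ c : Fin n → ℤ, c ∈ S ∧ ReflTransGen Rel r0 c ∧ ∀ i, |(c i : ℝ) - z i| ≤ 1 - β := by
    intro z hz
    induction hz with
    | refl =>
      refine ⟨r0, hr0S, .refl, fun i => ?_⟩
      have := hrnd_half x0 i
      have : |(r0 i : ℝ) - x0 i| ≤ 1/2 := this
      linarith
    | @tail w z' hab hwz' ih =>
      obtain ⟨cc, hccS, hreach, hinv⟩ := ih
      obtain ⟨hwcl, hz'cl, hdist⟩ := hwz'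
      by_cases hcase : dist (toE n (fun i => round (z' i))) z' < r
      · -- good step: move to the rounding of z'
        set c' : Fin n → ℤ := fun i => round (z' i) with hc'def
        have hc'S : c' ∈ S := hgood z' hz'cl c' hcase
        have hinv' : ∀ i, |(c' i : ℝ) - z' i| ≤ 1 - β := by
          intro i
          have := hrnd_half z' i
          have h : |(c' i : ℝ) - z' i| ≤ 1/2 := this
          linarith
        by_cases heq : cc = c'
        · exact ⟨c', hc'S, heq ▸ hreach, hinv'⟩
        · refine ⟨c', hc'S, hreach.tail ⟨hccS, hc'S, heq, fun i => ?_, ?_⟩, hinv'⟩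
          · have h1 := hinv i
            have h2 : |w i - z' i| ≤ dist w z' := coord_le_dist w z' i
            have h3 : |(c' i:ℝ) - z' i| ≤ 1/2 := hrnd_half z' i
            have hreal : |(cc i : ℝ) - (c' i:ℝ)| < 2 := by
              calc |(cc i : ℝ) - (c' i:ℝ)|
                  ≤ |(cc i : ℝ) - w i| + |w i - (c' i:ℝ)| := abs_sub_le _ _ _
                _ ≤ |(cc i : ℝ) - w i| + (|w i - z' i| + |z' i - (c' i:ℝ)|) := by
                    have := abs_sub_le (w i) (z' i) ((c' i:ℝ)); linarith
                _ < 2 := by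
                    rw [abs_sub_comm (z' i)] at *
                    linarith
            have hcast : ((|cc i - c' i| : ℤ) : ℝ) < 2 := by push_cast; exact hreal
            have : |cc i - c' i| < 2 := by exact_mod_cast hcast
            omega
          · simpa using le_trans (Finset.card_filter_le _ _) (by simp)
      · -- bad step: z' is deep inside a unit cube, keep cc
        push_neg at hcase
        refine ⟨cc, hccS, hreach, fun i => ?_⟩
        have hmin : ∀ m : ℤ, α ≤ |z' i - (m:ℝ)| := hbad z' hcase i
        have hα12 : α ≤ 1/2 := by
          have := hmin (round (z' i))
          have h2 := abs_sub_round (z' i)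
          linarith
        have hβα : β = α := min_eq_left hα12
        have h1 := hinv i
        have h2 : |w i - z' i| ≤ dist w z' := coord_le_dist w z' i
        have hlt1 : |(cc i:ℝ) - z' i| < 1 := by
          calc |(cc i:ℝ) - z' i| ≤ |(cc i:ℝ) - w i| + |w i - z' i| := abs_sub_le _ _ _
            _ < (1 - β) + δ := by linarith
            _ < 1 := by rw [hδdef]; linarith
        have := int_gap hmin hlt1
        rw [hβα]
        exact this
  obtain ⟨c, hcS, hreach, hinv⟩ := key y0 hchain
  -- link c to the rounding of y0
  have hlink : ReflTransGen Rel c ry := by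
    by_cases heq : c = ry
    · rw [heq]
    · refine ReflTransGen.single ⟨hcS, hryS, heq, fun i => ?_, ?_⟩
      · have h1 := hinv i
        have h3 : |(ry i:ℝ) - y0 i| ≤ 1/2 := hrnd_half y0 i
        have hreal : |(c i : ℝ) - (ry i:ℝ)| < 2 := by
          calc |(c i : ℝ) - (ry i:ℝ)|
              ≤ |(c i : ℝ) - y0 i| + |y0 i - (ry i:ℝ)| := abs_sub_le _ _ _
            _ < 2 := by rw [abs_sub_comm (y0 i)]; linarith
        have hcast : ((|c i - ry i| : ℤ) : ℝ) < 2 := by push_cast; exact hreal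
        have : |c i - ry i| < 2 := by exact_mod_cast hcast
        omega
      · simpa using le_trans (Finset.card_filter_le _ _) (by simp)
  -- the two digital balls around the witnesses
  have hp_to_r0 : ReflTransGen Rel p r0 :=
    ball_conn S x0 r (fun q' hq' => hgoodX x0 hx0X q' hq') p hpx0
  have hq_to_ry : ReflTransGen Rel q ry :=
    ball_conn S y0 r (fun q' hq' => hgoodX y0 hy0X q' hq') q hqy0
  have hsymmrel : ∀ a b, Rel a b → Rel b a := fun a b ⟨h1, h2, h3⟩ => ⟨h2, h1, kAdj_symm h3⟩
  exact ((hp_to_r0.trans hreach).trans hlink).trans (rtg_symm hsymmrel hq_to_ry)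
end
end

section
/- There exists a disconnected set X ⊂ R^2 with connected closure such that the offset discretization Δ_r(X) with r = 1/2 is not 0-connected (i.e., the bound r > sqrt(n−1)/2 in the 0-connectedness theorem is tight for n = 2). -/
noncomputable section

/-- The curve `t ↦ (t, 1/2)`. -/
def cpt (t : ℝ) : EuclideanSpace ℝ (Fin 2) := WithLp.toLp 2 ![t, 1/2]

lemma cpt_continuous : Continuous cpt := by
  have : cpt = (EuclideanSpace.equiv (Fin 2) ℝ).symm ∘ (fun t => ![t, 1/2]) := rfl
  rw [this]
  refine (EuclideanSpace.equiv (Fin 2) ℝ).symm.continuous.comp (continuous_pi fun i => ?_)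
  fin_cases i <;> simp <;> fun_prop

lemma dist_toE_cpt (p : Fin 2 → ℤ) (t : ℝ) :
    dist (toE 2 p) (cpt t) = Real.sqrt (((p 0 : ℝ) - t)^2 + ((p 1 : ℝ) - 1/2)^2) := by
  rw [EuclideanSpace.dist_eq]
  simp [toE, cpt, Fin.sum_univ_two, Real.dist_eq, sq_abs]

lemma int_half (z : ℤ) : (1/4 : ℝ) ≤ ((z : ℝ) - 1/2)^2 := by
  rcases le_or_gt z 0 with h | h
  · have : (z : ℝ) ≤ 0 := by exact_mod_cast h
    nlinarith
  · have : (1 : ℝ) ≤ z := by exact_mod_cast h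
    nlinarith

def Xset : Set (EuclideanSpace ℝ (Fin 2)) := cpt '' (Set.Icc 0 2 \ {1})

lemma mem_disc_iff (p : Fin 2 → ℤ) :
    p ∈ disc 2 Xset (1/2) ↔
      ∃ t ∈ Set.Icc (0:ℝ) 2 \ {1}, dist (toE 2 p) (cpt t) ≤ 1/2 := by
  simp [disc, offset, Xset]

lemma disc_coord (p : Fin 2 → ℤ) (hp : p ∈ disc 2 Xset (1/2)) : p 0 = 0 ∨ p 0 = 2 := by
  rw [mem_disc_iff] at hp
  obtain ⟨t, ⟨⟨ht0, ht2⟩, ht1⟩, hd⟩ := hp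
  rw [dist_toE_cpt] at hd
  have h0 : (0:ℝ) ≤ ((p 0 : ℝ) - t)^2 + ((p 1 : ℝ) - 1/2)^2 := by positivity
  have hS : ((p 0 : ℝ) - t)^2 + ((p 1 : ℝ) - 1/2)^2 ≤ 1/4 := by
    nlinarith [Real.sq_sqrt h0, Real.sqrt_nonneg (((p 0 : ℝ) - t)^2 + ((p 1 : ℝ) - 1/2)^2)]
  have hq := int_half (p 1)
  have hpt : ((p 0 : ℝ)) = t := by nlinarith [sq_nonneg ((p 0 : ℝ) - t)]
  have hp0 : (0:ℝ) ≤ (p 0 : ℝ) := hpt ▸ ht0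
  have hp2 : ((p 0 : ℝ)) ≤ 2 := hpt ▸ ht2
  have hp1 : ((p 0 : ℝ)) ≠ 1 := hpt ▸ ht1
  have h0' : (0:ℤ) ≤ p 0 := by exact_mod_cast hp0
  have h2' : p 0 ≤ 2 := by exact_mod_cast hp2
  have h1' : p 0 ≠ 1 := by exact_mod_cast hp1
  omega

lemma sqrt_quarter : Real.sqrt (1/4) = 1/2 := by
  rw [show (1/4 : ℝ) = (1/2)^2 by norm_num, Real.sqrt_sq (by norm_num)]

lemma zero_mem : (![0, 0] : Fin 2 → ℤ) ∈ disc 2 Xset (1/2) := by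
  rw [mem_disc_iff]
  refine ⟨0, ⟨by constructor <;> norm_num, by norm_num⟩, ?_⟩
  rw [dist_toE_cpt]
  have h4 : (((![0,0] : Fin 2 → ℤ) 0 : ℝ) - 0)^2 + (((![0,0] : Fin 2 → ℤ) 1 : ℝ) - 1/2)^2
      = 1/4 := by norm_num
  rw [h4, sqrt_quarter]

lemma two_mem : (![2, 0] : Fin 2 → ℤ) ∈ disc 2 Xset (1/2) := by
  rw [mem_disc_iff]
  refine ⟨2, ⟨by constructor <;> norm_num, by norm_num⟩, ?_⟩
  rw [dist_toE_cpt]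
  have h4 : (((![2,0] : Fin 2 → ℤ) 0 : ℝ) - 2)^2 + (((![2,0] : Fin 2 → ℤ) 1 : ℝ) - 1/2)^2
      = 1/4 := by norm_num
  rw [h4, sqrt_quarter]

/-- The bound `r > √(n-1) / 2` is tight for `n = 2`: there is a disconnected `X ⊂ ℝ²`
with connected closure whose `(1/2)`-offset discretization is not `0`-connected. -/
theorem tightness_zero :
    ∃ X : Set (EuclideanSpace ℝ (Fin 2)),
      ¬ IsConnected X ∧ IsConnected (closure X) ∧
        ¬ kConn 2 0 (disc 2 X (1 / 2)) := by
  refine ⟨Xset, ?_, ?_, ?_⟩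
  · -- not connected
    intro h
    have hc : Continuous (fun x : EuclideanSpace ℝ (Fin 2) => x 0) :=
      (EuclideanSpace.proj (0 : Fin 2)).continuous
    have himg : IsConnected ((fun x : EuclideanSpace ℝ (Fin 2) => x 0) '' Xset) :=
      h.image _ hc.continuousOn
    have h0 : (0:ℝ) ∈ (fun x : EuclideanSpace ℝ (Fin 2) => x 0) '' Xset :=
      ⟨cpt 0, ⟨0, ⟨by constructor <;> norm_num, by norm_num⟩, rfl⟩, rfl⟩
    have h2 : (2:ℝ) ∈ (fun x : EuclideanSpace ℝ (Fin 2) => x 0) '' Xset :=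
      ⟨cpt 2, ⟨2, ⟨by constructor <;> norm_num, by norm_num⟩, rfl⟩, rfl⟩
    have h1 : (1:ℝ) ∈ (fun x : EuclideanSpace ℝ (Fin 2) => x 0) '' Xset :=
      himg.isPreconnected.Icc_subset h0 h2 (by constructor <;> norm_num)
    obtain ⟨x, ⟨t, ht, rfl⟩, hx1⟩ := h1
    exact ht.2 (by simpa [cpt] using hx1)
  · -- closure connected
    have hsets : Set.Icc (0:ℝ) 2 \ {1} = Set.Ico 0 1 ∪ Set.Ioc 1 2 := by
      ext x
      simp only [Set.mem_diff, Set.mem_Icc, Set.mem_singleton_iff, Set.mem_union,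
        Set.mem_Ico, Set.mem_Ioc]
      constructor
      · rintro ⟨⟨ha, hb⟩, hne⟩
        rcases lt_or_gt_of_ne hne with h | h
        · exact Or.inl ⟨ha, h⟩
        · exact Or.inr ⟨h, hb⟩
      · rintro (⟨ha, hb⟩ | ⟨ha, hb⟩)
        · exact ⟨⟨ha, by linarith⟩, by linarith⟩
        · exact ⟨⟨by linarith, hb⟩, by linarith⟩
    have hclD : closure (Set.Icc (0:ℝ) 2 \ {1}) = Set.Icc 0 2 := by
      rw [hsets, closure_union, closure_Ico (by norm_num : (0:ℝ) ≠ 1),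
        closure_Ioc (by norm_num : (1:ℝ) ≠ 2),
        Set.Icc_union_Icc_eq_Icc (by norm_num : (0:ℝ) ≤ 1) (by norm_num : (1:ℝ) ≤ 2)]
    have hXcl : closure Xset = cpt '' Set.Icc 0 2 := by
      apply Set.Subset.antisymm
      · exact closure_minimal (Set.image_mono Set.diff_subset)
          ((isCompact_Icc.image cpt_continuous).isClosed)
      · calc cpt '' Set.Icc 0 2 = cpt '' closure (Set.Icc 0 2 \ {1}) := by rw [hclD]
          _ ⊆ closure (cpt '' (Set.Icc 0 2 \ {1})) :=
              image_closure_subset_closure_image cpt_continuous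
    rw [hXcl]
    exact (isConnected_Icc (by norm_num : (0:ℝ) ≤ 2)).image cpt cpt_continuous.continuousOn
  · -- not 0-connected
    intro h
    have hpath := h _ zero_mem _ two_mem
    have key : ∀ b, Relation.ReflTransGen
        (fun a b => a ∈ disc 2 Xset (1/2) ∧ b ∈ disc 2 Xset (1/2) ∧ kAdj 2 0 a b)
        ![0, 0] b → b 0 = 0 := by
      intro b hb
      induction hb with
      | refl => rfl
      | tail _ hR ih =>
        obtain ⟨_, hbS, hadj⟩ := hR
        rcases disc_coord _ hbS with h0 | h2
        · exact h0
        · exfalso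
          have habs := hadj.2.1 0
          rw [ih, h2] at habs
          norm_num at habs
    have := key _ hpath
    simp at this
end
end
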